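/- arXiv:1401.6617 — 3 statements merged into one kernel-verified Lean document; each statement's English description precedes it below -/
import Mathlib

section
/- Suppose $T$ is a sublinear operator mapping measurable functions on $\mathbb{R}^n$ to nonnegative measurable functions such that: (i) $T$ is of weak type $(1,1)$ with respect to a weight $w \in A_1$, i.e., $\lambda \cdot w(\{x : Tf(x) > \lambda\}) \le C \int |f| w$ for all $\lambda > 0$; (ii) for every ball $B$, every $f$ supported outside $2B$, and every $x \in B$, $Tf(x) \le C \sum_{\ell=1}^\infty \frac{1}{|2^{\ell+1}B|}\int_{2^{\ell+1}B} |f(z)|\,dz$. Then for every $0 < \kappa < 1$ there is $C' > 0$ such that for all balls $B$ and $\lambda > 0$: $\lambda \cdot w(\{x \in B : Tf(x) > \lambda\}) \le C' w(B)^\kappa \|f\|_{L^{1,\kappa}(w)}$. -/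
set_option maxHeartbeats 1000000


open MeasureTheory Metric ENNReal

theorem stmt10 {n : ℕ} (hn : 1 ≤ n) (κ : ℝ) (hκ0 : 0 < κ) (hκ1 : κ < 1)
    (w : EuclideanSpace ℝ (Fin n) → ℝ) (hw0 : ∀ x, 0 ≤ w x) (hwloc : LocallyIntegrable w)
    (hwpos : ∀ x₀ r, 0 < r → 0 < ∫ x in ball x₀ r, w x)
    (C₁ : ℝ) (hC₁ : 0 < C₁)
    (hA1 : ∀ x₀ r, 0 < r →
      (volume (ball x₀ r)).toReal⁻¹ * ∫ x in ball x₀ r, w x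
        ≤ C₁ * essInf w (volume.restrict (ball x₀ r)))
    (Cd : ℝ) (hCd : 0 < Cd)
    (hdouble : ∀ x₀ r, 0 < r → ∫ x in ball x₀ (2 * r), w x ≤ Cd * ∫ x in ball x₀ r, w x)
    (Cc δ : ℝ) (hCc : 0 < Cc) (hδ : 0 < δ)
    (hcmp : ∀ x₀ r, 0 < r → ∀ E : Set (EuclideanSpace ℝ (Fin n)), MeasurableSet E →
      E ⊆ ball x₀ r →
      (∫ x in E, w x) ≤
        Cc * ((volume E).toReal / (volume (ball x₀ r)).toReal) ^ δ * ∫ x in ball x₀ r, w x)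
    (T : (EuclideanSpace ℝ (Fin n) → ℝ) → EuclideanSpace ℝ (Fin n) → ℝ≥0∞)
    (hTmeas : ∀ f, Measurable f → Measurable (T f))
    (hTsub : ∀ f g x, T (f + g) x ≤ T f x + T g x)
    (A : ℝ) (hA : 0 < A)
    (hweak : ∀ f, Measurable f → ∀ lam : ℝ, 0 < lam →
      ENNReal.ofReal lam *
          ∫⁻ x in {x | ENNReal.ofReal lam < T f x}, ENNReal.ofReal (w x)
        ≤ ENNReal.ofReal A * ∫⁻ x, ENNReal.ofReal |f x| * ENNReal.ofReal (w x))
    (CT : ℝ) (hCT : 0 < CT)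
    (hTloc : ∀ x₀ r, 0 < r → ∀ f : EuclideanSpace ℝ (Fin n) → ℝ, Measurable f →
      (∀ x ∈ ball x₀ (2 * r), f x = 0) → ∀ x ∈ ball x₀ r,
        T f x ≤ ENNReal.ofReal CT * ∑' ℓ : ℕ,
          (volume (ball x₀ (2 ^ (ℓ + 2) * r)))⁻¹ *
            ∫⁻ z in ball x₀ (2 ^ (ℓ + 2) * r), ENNReal.ofReal |f z|) :
    ∃ C > 0, ∀ f : EuclideanSpace ℝ (Fin n) → ℝ, Measurable f → ∀ M : ℝ, 0 ≤ M →
      (∀ x₀ r, 0 < r →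
        ∫⁻ x in ball x₀ r, ENNReal.ofReal |f x| * ENNReal.ofReal (w x)
          ≤ ENNReal.ofReal M * ENNReal.ofReal ((∫ x in ball x₀ r, w x) ^ κ)) →
      ∀ x₀ r, 0 < r → ∀ lam : ℝ, 0 < lam →
        ENNReal.ofReal lam *
            ∫⁻ x in ball x₀ r ∩ {x | ENNReal.ofReal lam < T f x}, ENNReal.ofReal (w x)
          ≤ ENNReal.ofReal (C * M) * ENNReal.ofReal ((∫ x in ball x₀ r, w x) ^ κ) := by
  classical
  have hκ1' : κ - 1 < 0 := by linarith
  have hn' : (0:ℝ) < (n:ℝ) := by exact_mod_cast hn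
  set ρ : ℝ := (2:ℝ) ^ ((n:ℝ) * δ * (κ - 1)) with hρdef
  have hρ0 : 0 < ρ := Real.rpow_pos_of_pos two_pos _
  have hexp : (n:ℝ) * δ * (κ - 1) < 0 :=
    mul_neg_of_pos_of_neg (by positivity) hκ1'
  have hρ1 : ρ < 1 := Real.rpow_lt_one_of_one_lt_of_neg one_lt_two hexp
  set D : ℝ := (Cc⁻¹) ^ (κ - 1) with hDdef
  have hD0 : 0 < D := Real.rpow_pos_of_pos (inv_pos.mpr hCc) _
  have hρ1' : 0 < 1 - ρ := by linarith
  set K : ℝ := CT * C₁ * D * (1 - ρ)⁻¹ with hKdef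
  have hK0 : 0 < K := by positivity
  have hmax : (0:ℝ) < max Cd 1 := lt_max_of_lt_right one_pos
  refine ⟨2 * A * max Cd 1 + 2 * K, by positivity, ?_⟩
  intro f hfmeas M hM hf x₀ r hr lam hlam
  set wB : ℝ := ∫ x in ball x₀ r, w x with hwBdef
  have hwB : 0 < wB := hwpos x₀ r hr
  have hInt : ∀ (c : EuclideanSpace ℝ (Fin n)) (s : ℝ), IntegrableOn w (ball c s) volume :=
    fun c s => (hwloc.integrableOn_isCompact (isCompact_closedBall c s)).mono_set
      ball_subset_closedBall
  have hlw : ∀ (c : EuclideanSpace ℝ (Fin n)) (s : ℝ),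
      ∫⁻ x in ball c s, ENNReal.ofReal (w x) = ENNReal.ofReal (∫ x in ball c s, w x) :=
    fun c s => (ofReal_integral_eq_lintegral_ofReal (hInt c s)
      (Filter.Eventually.of_forall hw0)).symm
  set f₁ : EuclideanSpace ℝ (Fin n) → ℝ := (ball x₀ (2*r)).indicator f with hf₁def
  set f₂ : EuclideanSpace ℝ (Fin n) → ℝ := (ball x₀ (2*r))ᶜ.indicator f with hf₂def
  have hf₁meas : Measurable f₁ := hfmeas.indicator measurableSet_ball
  have hf₂meas : Measurable f₂ := hfmeas.indicator measurableSet_ball.compl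
  have hf12 : f₁ + f₂ = f := by
    funext x
    by_cases hx : x ∈ ball x₀ (2*r) <;>
      simp [hf₁def, hf₂def, Set.indicator, hx]
  have hsplit : ∀ x, T f x ≤ T f₁ x + T f₂ x := fun x => hf12 ▸ hTsub f₁ f₂ x
  -- pointwise bound for T f₂ on the ball
  have hf2bound : ∀ x ∈ ball x₀ r, T f₂ x ≤ ENNReal.ofReal (K * M * wB ^ (κ - 1)) := by
    intro x hx
    have hf₂zero : ∀ y ∈ ball x₀ (2*r), f₂ y = 0 := by
      intro y hy; simp [hf₂def, Set.indicator, hy]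
    refine le_trans (hTloc x₀ r hr f₂ hf₂meas hf₂zero x hx) ?_
    have hterm : ∀ ℓ : ℕ,
        (volume (ball x₀ (2 ^ (ℓ + 2) * r)))⁻¹ *
            ∫⁻ z in ball x₀ (2 ^ (ℓ + 2) * r), ENNReal.ofReal |f₂ z|
          ≤ ENNReal.ofReal (C₁ * M * D * wB ^ (κ - 1) * ρ ^ ℓ) := by
      intro ℓ
      set u : ℝ := (2:ℝ) ^ (ℓ + 2) with hudef
      have hu0 : (0:ℝ) < u := by positivity
      have hu1 : (1:ℝ) ≤ u := by
        rw [hudef]; exact one_le_pow₀ one_le_two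
      set s : ℝ := u * r with hsdef
      have hs : 0 < s := by positivity
      set wBℓ : ℝ := ∫ z in ball x₀ s, w z with hwBℓdef
      have hwBℓ : 0 < wBℓ := hwpos x₀ s hs
      set Vℓ : ℝ := (volume (ball x₀ s)).toReal with hVℓdef
      have hVℓ : 0 < Vℓ := ENNReal.toReal_pos (measure_ball_pos volume x₀ hs).ne'
        measure_ball_lt_top.ne
      set m : ℝ := essInf w (volume.restrict (ball x₀ s)) with hmdef
      have hA1' : Vℓ⁻¹ * wBℓ ≤ C₁ * m := hA1 x₀ s hs
      have hm : 0 < m := by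
        have h0 : 0 < Vℓ⁻¹ * wBℓ := by positivity
        nlinarith
      have habs : ∀ z, |f₂ z| ≤ |f z| := by
        intro z
        by_cases hz : z ∈ (ball x₀ (2*r))ᶜ <;>
          simp [hf₂def, Set.indicator, hz, abs_nonneg]
      have hae : ∀ᵐ z ∂(volume.restrict (ball x₀ s)), m ≤ w z :=
        ae_essInf_le (Filter.isBoundedUnder_of ⟨0, fun z => hw0 z⟩)
      have hstep3 : ∫⁻ z in ball x₀ s, ENNReal.ofReal |f z|
          ≤ ENNReal.ofReal m⁻¹ *
            ∫⁻ z in ball x₀ s, ENNReal.ofReal |f z| * ENNReal.ofReal (w z) := by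
        rw [← lintegral_const_mul' _ _ ofReal_ne_top]
        refine lintegral_mono_ae ?_
        filter_upwards [hae] with z hz
        have h1 : (1:ℝ) ≤ m⁻¹ * w z := by
          have h2 := mul_le_mul_of_nonneg_left hz (inv_nonneg.mpr hm.le)
          rwa [inv_mul_cancel₀ hm.ne'] at h2
        calc ENNReal.ofReal |f z| = 1 * ENNReal.ofReal |f z| := (one_mul _).symm
          _ ≤ (ENNReal.ofReal m⁻¹ * ENNReal.ofReal (w z)) * ENNReal.ofReal |f z| := by
              refine mul_le_mul_left ?_ _
              rw [← ENNReal.ofReal_one, ← ENNReal.ofReal_mul (inv_nonneg.mpr hm.le)]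
              exact ENNReal.ofReal_le_ofReal h1
          _ = ENNReal.ofReal m⁻¹ * (ENNReal.ofReal |f z| * ENNReal.ofReal (w z)) := by ring
      have hMor : ∫⁻ z in ball x₀ s, ENNReal.ofReal |f z| * ENNReal.ofReal (w z)
          ≤ ENNReal.ofReal (M * wBℓ ^ κ) := by
        rw [ENNReal.ofReal_mul hM]
        exact hf x₀ s hs
      have hratio : (volume (ball x₀ r)).toReal / Vℓ = ((u ^ n : ℝ))⁻¹ := by
        have h1 : volume (ball x₀ s) =
            ENNReal.ofReal (u ^ n) * volume (ball (0 : EuclideanSpace ℝ (Fin n)) r) := by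
          rw [hsdef, Measure.addHaar_ball_mul_of_pos volume x₀ hu0 r,
            finrank_euclideanSpace_fin]
        have h2 : volume (ball x₀ r) = volume (ball (0 : EuclideanSpace ℝ (Fin n)) r) :=
          Measure.addHaar_ball_center volume x₀ r
        have hv : 0 < (volume (ball (0 : EuclideanSpace ℝ (Fin n)) r)).toReal :=
          ENNReal.toReal_pos (measure_ball_pos volume _ hr).ne' measure_ball_lt_top.ne
        have h3 : Vℓ = u ^ n * (volume (ball (0 : EuclideanSpace ℝ (Fin n)) r)).toReal := by
          rw [hVℓdef, h1, ENNReal.toReal_mul, ENNReal.toReal_ofReal (by positivity)]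
        rw [h3, h2]
        field_simp
      have hup : (0:ℝ) < u ^ ((n:ℝ) * δ) := Real.rpow_pos_of_pos hu0 _
      have hcmp' : wB ≤ Cc * (u ^ ((n:ℝ) * δ))⁻¹ * wBℓ := by
        have h := hcmp x₀ s hs (ball x₀ r) measurableSet_ball
          (ball_subset_ball (le_mul_of_one_le_left hr.le hu1))
        rw [← hVℓdef, ← hwBℓdef, ← hwBdef, hratio] at h
        have hA' : ((u ^ n : ℝ))⁻¹ ^ δ = (u ^ ((n:ℝ) * δ))⁻¹ := by
          rw [← Real.rpow_natCast u n, ← Real.rpow_neg hu0.le, ← Real.rpow_mul hu0.le,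
            neg_mul, Real.rpow_neg hu0.le]
        rwa [hA'] at h
      have hlow : Cc⁻¹ * u ^ ((n:ℝ) * δ) * wB ≤ wBℓ := by
        have h2 := mul_le_mul_of_nonneg_left hcmp'
          (le_of_lt (by positivity : (0:ℝ) < Cc⁻¹ * u ^ ((n:ℝ) * δ)))
        have e : Cc⁻¹ * u ^ ((n:ℝ) * δ) * (Cc * (u ^ ((n:ℝ) * δ))⁻¹ * wBℓ) = wBℓ := by
          field_simp
        linarith [h2, e.le, e.ge]
      have hB : (u ^ ((n:ℝ) * δ)) ^ (κ - 1) = ρ ^ (ℓ + 2) := by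
        rw [← Real.rpow_mul hu0.le, hudef, ← Real.rpow_natCast (2:ℝ) (ℓ + 2),
          ← Real.rpow_mul (by norm_num : (0:ℝ) ≤ 2),
          mul_comm ((ℓ + 2 : ℕ):ℝ) ((n:ℝ) * δ * (κ - 1)),
          Real.rpow_mul (by norm_num : (0:ℝ) ≤ 2), ← hρdef, Real.rpow_natCast]
      have hpow : wBℓ ^ (κ - 1) ≤ D * wB ^ (κ - 1) * ρ ^ ℓ := by
        have hb : (0:ℝ) < Cc⁻¹ * u ^ ((n:ℝ) * δ) * wB := by positivity
        have h4 : wBℓ ^ (κ - 1) ≤ (Cc⁻¹ * u ^ ((n:ℝ) * δ) * wB) ^ (κ - 1) :=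
          Real.rpow_le_rpow_of_nonpos hb hlow hκ1'.le
        have h5 : (Cc⁻¹ * u ^ ((n:ℝ) * δ) * wB) ^ (κ - 1)
            = D * ρ ^ (ℓ + 2) * wB ^ (κ - 1) := by
          rw [Real.mul_rpow (by positivity) hwB.le, Real.mul_rpow (by positivity) hup.le,
            hB, ← hDdef]
        have h6 : ρ ^ (ℓ + 2) ≤ ρ ^ ℓ :=
          pow_le_pow_of_le_one hρ0.le hρ1.le (Nat.le_add_right ℓ 2)
        calc wBℓ ^ (κ - 1) ≤ D * ρ ^ (ℓ + 2) * wB ^ (κ - 1) := h5 ▸ h4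
          _ ≤ D * ρ ^ ℓ * wB ^ (κ - 1) := by
              have h7 : (0:ℝ) ≤ wB ^ (κ - 1) := Real.rpow_nonneg hwB.le _
              have h8 := mul_le_mul_of_nonneg_left h6 (mul_nonneg hD0.le h7)
              nlinarith [h8]
          _ = D * wB ^ (κ - 1) * ρ ^ ℓ := by ring
      have h1' : Vℓ⁻¹ * m⁻¹ ≤ C₁ / wBℓ := by
        rw [le_div_iff₀ hwBℓ]
        have h8 := mul_le_mul_of_nonneg_right hA1' (inv_nonneg.mpr hm.le)
        rw [mul_assoc C₁ m m⁻¹, mul_inv_cancel₀ hm.ne', mul_one] at h8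
        have e : Vℓ⁻¹ * m⁻¹ * wBℓ = Vℓ⁻¹ * wBℓ * m⁻¹ := by ring
        rw [e]
        exact h8
      have hreal : Vℓ⁻¹ * (m⁻¹ * (M * wBℓ ^ κ)) ≤ C₁ * M * D * wB ^ (κ - 1) * ρ ^ ℓ := by
        have hnn : (0:ℝ) ≤ M * wBℓ ^ κ :=
          mul_nonneg hM (Real.rpow_nonneg hwBℓ.le _)
        have step : Vℓ⁻¹ * (m⁻¹ * (M * wBℓ ^ κ)) = (Vℓ⁻¹ * m⁻¹) * (M * wBℓ ^ κ) := by ring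
        rw [step]
        calc (Vℓ⁻¹ * m⁻¹) * (M * wBℓ ^ κ) ≤ (C₁ / wBℓ) * (M * wBℓ ^ κ) :=
              mul_le_mul_of_nonneg_right h1' hnn
          _ = C₁ * M * (wBℓ ^ κ / wBℓ) := by ring
          _ = C₁ * M * wBℓ ^ (κ - 1) := by
              rw [Real.rpow_sub hwBℓ, Real.rpow_one]
          _ ≤ C₁ * M * (D * wB ^ (κ - 1) * ρ ^ ℓ) :=
              mul_le_mul_of_nonneg_left hpow (mul_nonneg hC₁.le hM)
          _ = C₁ * M * D * wB ^ (κ - 1) * ρ ^ ℓ := by ring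
      have hVeq : (volume (ball x₀ s))⁻¹ = ENNReal.ofReal Vℓ⁻¹ := by
        rw [ENNReal.ofReal_inv_of_pos hVℓ, hVℓdef, ENNReal.ofReal_toReal measure_ball_lt_top.ne]
      calc (volume (ball x₀ s))⁻¹ * ∫⁻ z in ball x₀ s, ENNReal.ofReal |f₂ z|
          ≤ (volume (ball x₀ s))⁻¹ *
            (ENNReal.ofReal m⁻¹ * ENNReal.ofReal (M * wBℓ ^ κ)) := by
            refine mul_le_mul_right ?_ _
            refine le_trans (lintegral_mono fun z => ENNReal.ofReal_le_ofReal (habs z)) ?_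
            exact le_trans hstep3 (mul_le_mul_right hMor _)
        _ = ENNReal.ofReal (Vℓ⁻¹ * (m⁻¹ * (M * wBℓ ^ κ))) := by
            rw [hVeq, ← ENNReal.ofReal_mul (inv_nonneg.mpr hm.le),
              ← ENNReal.ofReal_mul (inv_nonneg.mpr hVℓ.le)]
        _ ≤ ENNReal.ofReal (C₁ * M * D * wB ^ (κ - 1) * ρ ^ ℓ) :=
            ENNReal.ofReal_le_ofReal hreal
    set c : ℝ := C₁ * M * D * wB ^ (κ - 1) with hcdef
    have hc0 : (0:ℝ) ≤ c := by
      rw [hcdef]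
      exact mul_nonneg (mul_nonneg (mul_nonneg hC₁.le hM) hD0.le)
        (Real.rpow_nonneg hwB.le _)
    calc ENNReal.ofReal CT * ∑' ℓ : ℕ,
          (volume (ball x₀ (2 ^ (ℓ + 2) * r)))⁻¹ *
            ∫⁻ z in ball x₀ (2 ^ (ℓ + 2) * r), ENNReal.ofReal |f₂ z|
        ≤ ENNReal.ofReal CT * ∑' ℓ : ℕ, ENNReal.ofReal (c * ρ ^ ℓ) :=
          mul_le_mul_right (ENNReal.tsum_le_tsum hterm) _
      _ = ENNReal.ofReal CT * ENNReal.ofReal (∑' ℓ : ℕ, c * ρ ^ ℓ) := by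
          rw [ENNReal.ofReal_tsum_of_nonneg
            (fun ℓ => mul_nonneg hc0 (pow_nonneg hρ0.le ℓ))
            ((summable_geometric_of_lt_one hρ0.le hρ1).mul_left c)]
      _ = ENNReal.ofReal (CT * (c * (1 - ρ)⁻¹)) := by
          rw [tsum_mul_left, tsum_geometric_of_lt_one hρ0.le hρ1,
            ← ENNReal.ofReal_mul hCT.le]
      _ = ENNReal.ofReal (K * M * wB ^ (κ - 1)) := by
          rw [hKdef, hcdef]
          exact congrArg ENNReal.ofReal (by ring)
  -- splitting of the level set
  have hincl : ball x₀ r ∩ {x | ENNReal.ofReal lam < T f x} ⊆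
      {x | ENNReal.ofReal (lam/2) < T f₁ x} ∪
        (ball x₀ r ∩ {x | ENNReal.ofReal (lam/2) < T f₂ x}) := by
    rintro x ⟨hxB, hx⟩
    by_cases hc1 : ENNReal.ofReal (lam/2) < T f₁ x
    · exact Or.inl hc1
    · refine Or.inr ⟨hxB, ?_⟩
      by_contra hc2
      rw [Set.mem_setOf_eq] at hc2
      push_neg at hc1 hc2
      have h3 : T f x ≤ ENNReal.ofReal (lam/2) + ENNReal.ofReal (lam/2) :=
        le_trans (hsplit x) (add_le_add hc1 hc2)
      rw [← ENNReal.ofReal_add (by linarith) (by linarith)] at h3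
      have h4 : lam/2 + lam/2 = lam := by ring
      rw [h4] at h3
      exact absurd hx (not_lt.mpr h3)
  have hlam2 : 0 < lam/2 := by linarith
  have hwκ : (0:ℝ) ≤ wB ^ κ := Real.rpow_nonneg hwB.le _
  -- term 1
  have hT1 : ENNReal.ofReal lam *
      ∫⁻ x in {x | ENNReal.ofReal (lam/2) < T f₁ x}, ENNReal.ofReal (w x)
      ≤ ENNReal.ofReal (2 * A * max Cd 1 * M * wB ^ κ) := by
    have hglob : ∫⁻ x, ENNReal.ofReal |f₁ x| * ENNReal.ofReal (w x)
        = ∫⁻ x in ball x₀ (2*r), ENNReal.ofReal |f x| * ENNReal.ofReal (w x) := by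
      rw [← lintegral_indicator measurableSet_ball]
      congr 1
      funext x
      by_cases hx : x ∈ ball x₀ (2*r) <;>
        simp [hf₁def, Set.indicator, hx]
    have h2B0 : (0:ℝ) ≤ ∫ x in ball x₀ (2*r), w x := integral_nonneg fun x => hw0 x
    have hMor2 : ∫⁻ x in ball x₀ (2*r), ENNReal.ofReal |f x| * ENNReal.ofReal (w x)
        ≤ ENNReal.ofReal (M * (max Cd 1 * wB ^ κ)) := by
      refine le_trans (hf x₀ (2*r) (by linarith)) ?_
      rw [ENNReal.ofReal_mul hM]
      refine mul_le_mul_right (ENNReal.ofReal_le_ofReal ?_) _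
      calc (∫ x in ball x₀ (2*r), w x) ^ κ ≤ (Cd * wB) ^ κ :=
            Real.rpow_le_rpow h2B0 (hdouble x₀ r hr) hκ0.le
        _ = Cd ^ κ * wB ^ κ := Real.mul_rpow hCd.le hwB.le
        _ ≤ max Cd 1 * wB ^ κ := by
            refine mul_le_mul_of_nonneg_right ?_ hwκ
            rcases le_total Cd 1 with h | h
            · exact le_trans (Real.rpow_le_one hCd.le h hκ0.le) (le_max_right _ _)
            · refine le_trans ?_ (le_max_left _ _)
              have := Real.rpow_le_rpow_of_exponent_le h hκ1.le
              rwa [Real.rpow_one] at this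
    have hl2 : ENNReal.ofReal lam = ENNReal.ofReal 2 * ENNReal.ofReal (lam/2) := by
      rw [← ENNReal.ofReal_mul (by norm_num : (0:ℝ) ≤ 2)]
      congr 1
      ring
    calc ENNReal.ofReal lam *
        ∫⁻ x in {x | ENNReal.ofReal (lam/2) < T f₁ x}, ENNReal.ofReal (w x)
        = ENNReal.ofReal 2 * (ENNReal.ofReal (lam/2) *
            ∫⁻ x in {x | ENNReal.ofReal (lam/2) < T f₁ x}, ENNReal.ofReal (w x)) := by
          rw [hl2, mul_assoc]
      _ ≤ ENNReal.ofReal 2 *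
            (ENNReal.ofReal A * ∫⁻ x, ENNReal.ofReal |f₁ x| * ENNReal.ofReal (w x)) :=
          mul_le_mul_right (hweak f₁ hf₁meas (lam/2) hlam2) _
      _ ≤ ENNReal.ofReal 2 *
            (ENNReal.ofReal A * ENNReal.ofReal (M * (max Cd 1 * wB ^ κ))) := by
          rw [hglob]
          exact mul_le_mul_right (mul_le_mul_right hMor2 _) _
      _ = ENNReal.ofReal (2 * A * max Cd 1 * M * wB ^ κ) := by
          rw [← ENNReal.ofReal_mul hA.le, ← ENNReal.ofReal_mul (by norm_num : (0:ℝ) ≤ 2)]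
          exact congrArg ENNReal.ofReal (by ring)
  -- term 2
  have hT2 : ENNReal.ofReal lam *
      ∫⁻ x in ball x₀ r ∩ {x | ENNReal.ofReal (lam/2) < T f₂ x}, ENNReal.ofReal (w x)
      ≤ ENNReal.ofReal (2 * K * M * wB ^ κ) := by
    by_cases hcase : K * M * wB ^ (κ - 1) ≤ lam/2
    · have hempty : ball x₀ r ∩ {x | ENNReal.ofReal (lam/2) < T f₂ x} = ∅ := by
        ext x
        simp only [Set.mem_inter_iff, Set.mem_setOf_eq, Set.mem_empty_iff_false, iff_false,
          not_and, not_lt]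
        intro hxB
        exact le_trans (hf2bound x hxB) (ENNReal.ofReal_le_ofReal hcase)
      rw [hempty]
      simp
    · push_neg at hcase
      have hlamle : lam ≤ 2 * (K * M * wB ^ (κ - 1)) := by linarith
      have hnn2 : (0:ℝ) ≤ 2 * (K * M * wB ^ (κ - 1)) := by linarith
      calc ENNReal.ofReal lam *
          ∫⁻ x in ball x₀ r ∩ {x | ENNReal.ofReal (lam/2) < T f₂ x}, ENNReal.ofReal (w x)
          ≤ ENNReal.ofReal (2 * (K * M * wB ^ (κ - 1))) *
            ∫⁻ x in ball x₀ r, ENNReal.ofReal (w x) :=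
            mul_le_mul' (ENNReal.ofReal_le_ofReal hlamle)
              (lintegral_mono_set Set.inter_subset_left)
        _ = ENNReal.ofReal (2 * (K * M * wB ^ (κ - 1))) * ENNReal.ofReal wB := by
            rw [hlw x₀ r]
        _ = ENNReal.ofReal (2 * (K * M * wB ^ (κ - 1)) * wB) := by
            rw [← ENNReal.ofReal_mul hnn2]
        _ = ENNReal.ofReal (2 * K * M * wB ^ κ) := by
            refine congrArg ENNReal.ofReal ?_
            have hmulc : wB ^ (κ - 1) * wB = wB ^ κ := by
              rw [Real.rpow_sub hwB, Real.rpow_one, div_mul_cancel₀ _ hwB.ne']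
            calc 2 * (K * M * wB ^ (κ - 1)) * wB
                = 2 * K * M * (wB ^ (κ - 1) * wB) := by ring
              _ = 2 * K * M * wB ^ κ := by rw [hmulc]
  -- assembly
  have hnnA : (0:ℝ) ≤ 2 * A * max Cd 1 * M * wB ^ κ :=
    mul_nonneg (mul_nonneg (mul_nonneg (by linarith) hmax.le) hM) hwκ
  have hnnK : (0:ℝ) ≤ 2 * K * M * wB ^ κ :=
    mul_nonneg (mul_nonneg (by linarith) hM) hwκ
  have hnnCM : (0:ℝ) ≤ (2 * A * max Cd 1 + 2 * K) * M := by
    refine mul_nonneg ?_ hM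
    nlinarith
  calc ENNReal.ofReal lam *
      ∫⁻ x in ball x₀ r ∩ {x | ENNReal.ofReal lam < T f x}, ENNReal.ofReal (w x)
      ≤ ENNReal.ofReal lam *
        ((∫⁻ x in {x | ENNReal.ofReal (lam/2) < T f₁ x}, ENNReal.ofReal (w x))
          + ∫⁻ x in ball x₀ r ∩ {x | ENNReal.ofReal (lam/2) < T f₂ x},
              ENNReal.ofReal (w x)) := by
        refine mul_le_mul_right (le_trans (lintegral_mono_set hincl) ?_) _
        exact lintegral_union_le _ _ _
    _ = (ENNReal.ofReal lam *
          ∫⁻ x in {x | ENNReal.ofReal (lam/2) < T f₁ x}, ENNReal.ofReal (w x))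
        + ENNReal.ofReal lam *
          ∫⁻ x in ball x₀ r ∩ {x | ENNReal.ofReal (lam/2) < T f₂ x},
            ENNReal.ofReal (w x) := by
        rw [mul_add]
    _ ≤ ENNReal.ofReal (2 * A * max Cd 1 * M * wB ^ κ)
        + ENNReal.ofReal (2 * K * M * wB ^ κ) := add_le_add hT1 hT2
    _ = ENNReal.ofReal ((2 * A * max Cd 1 + 2 * K) * M * wB ^ κ) := by
        rw [← ENNReal.ofReal_add hnnA hnnK]
        exact congrArg ENNReal.ofReal (by ring)
    _ = ENNReal.ofReal ((2 * A * max Cd 1 + 2 * K) * M) * ENNReal.ofReal (wB ^ κ) := by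
        rw [← ENNReal.ofReal_mul hnnCM]
end

section
/- Suppose $T$ is a sublinear operator mapping measurable functions on $\mathbb{R}^n$ to nonnegative measurable functions such that: (i) $T$ is bounded on $L^p(\mathbb{R}^n)$ for some $1 < p < \infty$; (ii) for every ball $B = B(x_0,r)$, every $f$ supported outside $2B$, and every $x \in B$, $Tf(x) \le C \sum_{\ell=1}^\infty \frac{1}{|B(x_0, 2^{\ell+1} r)|}\int_{B(x_0,2^{\ell+1}r)} |f(z)|\,dz$. Let $\Phi : (0,\infty)\to(0,\infty)$ be increasing with $\Phi(2r) \le D\Phi(r)$ for all $r>0$ and $1 \le D < 2^n$. Then $T$ is bounded on the generalized Morrey space $L^{p,\Phi}$: $\|Tf\|_{L^{p,\Phi}} \le C' \|f\|_{L^{p,\Phi}}$. -/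
open MeasureTheory Metric ENNReal

lemma aux_real (k : ℕ) {p q D t a M Φs Φr : ℝ} (hp : 1 < p) (hq : 1/p + 1/q = 1)
    (hD : 0 < D) (ht : 0 < t) (ha : 0 < a) (hM : 0 ≤ M) (hΦs : 0 ≤ Φs) (hΦr : 0 ≤ Φr)
    (hdb : Φs ≤ D ^ k * Φr) :
    (t ^ k * a)⁻¹ * ((M ^ p * Φs) ^ (1/p) * (t ^ k * a) ^ (1/q)) ≤
      (M * Φr ^ (1/p) * a ^ (-(1/p))) * ((D / t) ^ (1/p)) ^ k := by
  have hp0 : (0:ℝ) < p := lt_trans zero_lt_one hp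
  have hta : (0:ℝ) < t ^ k * a := by positivity
  have e1 : (t ^ k * a)⁻¹ * ((M ^ p * Φs) ^ (1/p) * (t ^ k * a) ^ (1/q)) =
      (M * Φs ^ (1/p)) * (t ^ k * a) ^ (-(1/p)) := by
    rw [Real.mul_rpow (Real.rpow_nonneg hM p) hΦs, ← Real.rpow_mul hM,
      mul_one_div, div_self hp0.ne', Real.rpow_one]
    rw [show -(1/p) = -1 + 1/q by linarith, Real.rpow_add hta, Real.rpow_neg_one]
    ring
  have e2 : (M * Φr ^ (1/p) * a ^ (-(1/p))) * ((D / t) ^ (1/p)) ^ k =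
      (M * (D ^ k * Φr) ^ (1/p)) * (t ^ k * a) ^ (-(1/p)) := by
    have h1 : ((D / t) ^ (1/p)) ^ k = ((D/t) ^ k) ^ (1/p) := by
      rw [← Real.rpow_natCast ((D/t) ^ (1/p)) k, ← Real.rpow_mul (by positivity),
        mul_comm (1/p), Real.rpow_mul (by positivity), Real.rpow_natCast]
    rw [h1, div_pow, Real.div_rpow (by positivity) (by positivity),
      Real.mul_rpow (by positivity) hΦr,
      Real.mul_rpow (by positivity) ha.le,
      Real.rpow_neg ha.le, Real.rpow_neg (pow_nonneg ht.le k)]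
    have h2 : (0:ℝ) < (t ^ k) ^ (1/p) := by positivity
    have h3 : (0:ℝ) < a ^ (1/p) := by positivity
    field_simp
  rw [e1, e2]
  refine mul_le_mul_of_nonneg_right ?_ (Real.rpow_nonneg hta.le _)
  exact mul_le_mul_of_nonneg_left (Real.rpow_le_rpow hΦs hdb (by positivity)) hM

lemma aux_real2 {p b M φ x : ℝ} (hp : 1 < p) (hb : 0 ≤ b) (hM : 0 ≤ M) (hφ : 0 ≤ φ)
    (hx : 0 < x) :
    (b * (M * φ ^ (1/p) * x ^ (-(1/p)))) ^ p * x = b ^ p * (M ^ p * φ) := by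
  have hp0 : (0:ℝ) < p := lt_trans zero_lt_one hp
  rw [Real.mul_rpow hb (by positivity),
    Real.mul_rpow (by positivity) (Real.rpow_nonneg hx.le _),
    Real.mul_rpow hM (Real.rpow_nonneg hφ _),
    ← Real.rpow_mul hφ, one_div, inv_mul_cancel₀ hp0.ne', Real.rpow_one,
    ← Real.rpow_mul hx.le, show -p⁻¹ * p = -1 by field_simp, Real.rpow_neg_one]
  field_simp

theorem stmt11 {n : ℕ} (hn : 1 ≤ n) (p : ℝ) (hp : 1 < p)
    (Φ : ℝ → ℝ) (hΦpos : ∀ r > 0, 0 < Φ r) (hΦmono : MonotoneOn Φ (Set.Ioi 0))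
    (D : ℝ) (hD1 : 1 ≤ D) (hD2 : D < 2 ^ n)
    (hdouble : ∀ r > 0, Φ (2 * r) ≤ D * Φ r)
    (T : (EuclideanSpace ℝ (Fin n) → ℝ) → EuclideanSpace ℝ (Fin n) → ℝ≥0∞)
    (hTmeas : ∀ f, Measurable f → Measurable (T f))
    (hTsub : ∀ f g x, T (f + g) x ≤ T f x + T g x)
    (A : ℝ) (hA : 0 < A)
    (hTLp : ∀ f, Measurable f →
      ∫⁻ x, (T f x) ^ p ≤ ENNReal.ofReal A * ∫⁻ x, (ENNReal.ofReal |f x|) ^ p)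
    (CT : ℝ) (hCT : 0 < CT)
    (hTloc : ∀ x₀ r, 0 < r → ∀ f : EuclideanSpace ℝ (Fin n) → ℝ, Measurable f →
      (∀ x ∈ ball x₀ (2 * r), f x = 0) → ∀ x ∈ ball x₀ r,
        T f x ≤ ENNReal.ofReal CT * ∑' ℓ : ℕ,
          (volume (ball x₀ (2 ^ (ℓ + 2) * r)))⁻¹ *
            ∫⁻ z in ball x₀ (2 ^ (ℓ + 2) * r), ENNReal.ofReal |f z|) :
    ∃ C > 0, ∀ f : EuclideanSpace ℝ (Fin n) → ℝ, Measurable f → ∀ M : ℝ, 0 ≤ M →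
      (∀ (x₀ : EuclideanSpace ℝ (Fin n)) (r : ℝ), 0 < r →
        ∫⁻ x in ball x₀ r, (ENNReal.ofReal |f x|) ^ p ≤ ENNReal.ofReal (M ^ p * Φ r)) →
      ∀ (x₀ : EuclideanSpace ℝ (Fin n)) (r : ℝ), 0 < r →
        ∫⁻ x in ball x₀ r, (T f x) ^ p ≤ ENNReal.ofReal (C ^ p * M ^ p * Φ r) := by
  have hp0 : (0:ℝ) < p := lt_trans zero_lt_one hp
  have hpq : p.HolderConjugate (p/(p-1)) := Real.HolderConjugate.conjExponent hp
  set q : ℝ := p/(p-1) with hqdef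
  have hq' : 1/p + 1/q = 1 := by rw [one_div, one_div]; exact hpq.inv_add_inv_eq_one
  have hDpos : (0:ℝ) < D := lt_of_lt_of_le one_pos hD1
  have h2npos : (0:ℝ) < 2 ^ n := by positivity
  set θ : ℝ := (D / 2 ^ n) ^ (1/p) with hθdef
  have hθpos : 0 < θ := Real.rpow_pos_of_pos (div_pos hDpos h2npos) _
  have hθlt : θ < 1 :=
    Real.rpow_lt_one (le_of_lt (div_pos hDpos h2npos)) ((div_lt_one h2npos).2 hD2)
      (by positivity)
  set S : ℝ := (1 - θ)⁻¹ with hSdef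
  have hSpos : 0 < S := inv_pos.2 (by linarith)
  set v : ℝ := (volume (ball (0 : EuclideanSpace ℝ (Fin n)) 1)).toReal with hvdef
  have hvpos : 0 < v :=
    ENNReal.toReal_pos (measure_ball_pos _ _ one_pos).ne' measure_ball_lt_top.ne
  have hball : ∀ (x₀ : EuclideanSpace ℝ (Fin n)) (s : ℝ), 0 < s →
      volume (ball x₀ s) = ENNReal.ofReal (s ^ n * v) := by
    intro x₀ s hs
    rw [Measure.addHaar_ball_of_pos volume x₀ hs, finrank_euclideanSpace_fin,
      ENNReal.ofReal_mul (by positivity), hvdef,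
      ENNReal.ofReal_toReal measure_ball_lt_top.ne]
  have hΦpow : ∀ (k : ℕ) (s : ℝ), 0 < s → Φ (2 ^ k * s) ≤ D ^ k * Φ s := by
    intro k
    induction k with
    | zero => intro s hs; simp
    | succ k ih =>
      intro s hs
      have h2 : (0:ℝ) < 2 ^ k * s := by positivity
      calc Φ (2 ^ (k+1) * s) = Φ (2 * (2 ^ k * s)) := by ring_nf
        _ ≤ D * Φ (2 ^ k * s) := hdouble _ h2
        _ ≤ D * (D ^ k * Φ s) := mul_le_mul_of_nonneg_left (ih s hs) hDpos.le
        _ = D ^ (k+1) * Φ s := by ring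
  set K2 : ℝ := CT * θ ^ 2 * S with hK2def
  have hK2pos : 0 < K2 := by positivity
  set Cb : ℝ := 2 ^ (p-1) * (A * D + K2 ^ p) with hCbdef
  have hCbpos : 0 < Cb := by
    have : (0:ℝ) < 2 ^ (p-1) := Real.rpow_pos_of_pos two_pos _
    have : (0:ℝ) < K2 ^ p := Real.rpow_pos_of_pos hK2pos _
    positivity
  refine ⟨Cb ^ (1/p), Real.rpow_pos_of_pos hCbpos _, ?_⟩
  have hCp : (Cb ^ (1/p)) ^ p = Cb := by
    rw [← Real.rpow_mul hCbpos.le, one_div, inv_mul_cancel₀ hp0.ne', Real.rpow_one]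
  intro f hf M hM hMorrey x₀ r hr
  rw [hCp, mul_assoc]
  -- decomposition
  set g : EuclideanSpace ℝ (Fin n) → ℝ := (ball x₀ (2*r)).indicator f with hgdef
  have hgmeas : Measurable g := hf.indicator measurableSet_ball
  set h : EuclideanSpace ℝ (Fin n) → ℝ := fun x => f x - g x with hhdef
  have hhmeas : Measurable h := hf.sub hgmeas
  have hfgh : f = g + h := by funext x; simp [hhdef]
  have hzero : ∀ x ∈ ball x₀ (2*r), h x = 0 := by
    intro x hx
    simp [hhdef, hgdef, Set.indicator_of_mem hx]
  have hTfx : ∀ x, T f x ≤ T g x + T h x := by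
    intro x
    have := hTsub g h x
    rwa [← hfgh] at this
  have hstep : ∀ x, (T f x) ^ p ≤ 2 ^ (p-1) * ((T g x) ^ p + (T h x) ^ p) := by
    intro x
    calc (T f x) ^ p ≤ (T g x + T h x) ^ p := ENNReal.rpow_le_rpow (hTfx x) hp0.le
      _ ≤ 2 ^ (p-1) * ((T g x) ^ p + (T h x) ^ p) :=
        ENNReal.rpow_add_le_mul_rpow_add_rpow _ _ hp.le
  -- local part
  have hIg : ∫⁻ x in ball x₀ r, (T g x) ^ p ≤ ENNReal.ofReal (A * D * (M ^ p * Φ r)) := by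
    have h1 : ∫⁻ x in ball x₀ r, (T g x) ^ p ≤ ∫⁻ x, (T g x) ^ p :=
      setLIntegral_le_lintegral _ _
    have h3 : ∫⁻ x, (ENNReal.ofReal |g x|) ^ p
        = ∫⁻ x in ball x₀ (2*r), (ENNReal.ofReal |f x|) ^ p := by
      rw [← lintegral_indicator measurableSet_ball]
      congr 1
      funext x
      by_cases hx : x ∈ ball x₀ (2*r)
      · simp [Set.indicator_of_mem hx, hgdef]
      · simp [Set.indicator_of_notMem hx, hgdef, ENNReal.zero_rpow_of_pos hp0]
    have h4 : ∫⁻ x in ball x₀ (2*r), (ENNReal.ofReal |f x|) ^ p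
        ≤ ENNReal.ofReal (M ^ p * Φ (2*r)) := hMorrey x₀ (2*r) (by linarith)
    have h5 : M ^ p * Φ (2*r) ≤ D * (M ^ p * Φ r) := by
      have hd := hdouble r hr
      have hMp : 0 ≤ M ^ p := Real.rpow_nonneg hM p
      calc M ^ p * Φ (2*r) ≤ M ^ p * (D * Φ r) := mul_le_mul_of_nonneg_left hd hMp
        _ = D * (M ^ p * Φ r) := by ring
    calc ∫⁻ x in ball x₀ r, (T g x) ^ p ≤ ∫⁻ x, (T g x) ^ p := h1
      _ ≤ ENNReal.ofReal A * ∫⁻ x, (ENNReal.ofReal |g x|) ^ p := hTLp g hgmeas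
      _ ≤ ENNReal.ofReal A * ENNReal.ofReal (M ^ p * Φ (2*r)) := by
          rw [h3]; exact mul_le_mul_right h4 _
      _ ≤ ENNReal.ofReal A * ENNReal.ofReal (D * (M ^ p * Φ r)) :=
          mul_le_mul_right (ENNReal.ofReal_le_ofReal h5) _
      _ = ENNReal.ofReal (A * D * (M ^ p * Φ r)) := by
          rw [← ENNReal.ofReal_mul hA.le]; ring_nf
  -- far part
  have hΦrnn : 0 ≤ Φ r := (hΦpos r hr).le
  have hc₀nn : 0 ≤ M * Φ r ^ (1/p) * (r ^ n * v) ^ (-(1/p)) :=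
    mul_nonneg (mul_nonneg hM (Real.rpow_nonneg hΦrnn _))
      (Real.rpow_nonneg (by positivity) _)
  have hterm : ∀ ℓ : ℕ,
      (volume (ball x₀ (2 ^ (ℓ + 2) * r)))⁻¹ *
        ∫⁻ z in ball x₀ (2 ^ (ℓ + 2) * r), ENNReal.ofReal |h z|
      ≤ ENNReal.ofReal (M * Φ r ^ (1/p) * (r ^ n * v) ^ (-(1/p))) *
          ENNReal.ofReal θ ^ (ℓ + 2) := by
    intro ℓ
    have hs : (0:ℝ) < 2 ^ (ℓ+2) * r := by positivity
    have hsnv : (0:ℝ) < (2 ^ (ℓ+2) * r) ^ n * v := by positivity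
    have hvol : volume (ball x₀ ((2:ℝ) ^ (ℓ+2) * r))
        = ENNReal.ofReal ((2 ^ (ℓ+2) * r) ^ n * v) := hball x₀ _ hs
    have habs : ∀ z, |h z| ≤ |f z| := by
      intro z
      by_cases hz : z ∈ ball x₀ (2*r)
      · simp [hhdef, hgdef, Set.indicator_of_mem hz, abs_nonneg]
      · simp [hhdef, hgdef, Set.indicator_of_notMem hz]
    have h1 : ∫⁻ z in ball x₀ ((2:ℝ) ^ (ℓ+2) * r), ENNReal.ofReal |h z|
        ≤ ∫⁻ z in ball x₀ ((2:ℝ) ^ (ℓ+2) * r), ENNReal.ofReal |f z| :=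
      lintegral_mono fun z => ENNReal.ofReal_le_ofReal (habs z)
    have h2 := ENNReal.lintegral_mul_le_Lp_mul_Lq
      (volume.restrict (ball x₀ ((2:ℝ) ^ (ℓ+2) * r))) hpq
      (f := fun z => ENNReal.ofReal |f z|) (g := fun _ => 1)
      hf.abs.ennreal_ofReal.aemeasurable aemeasurable_const
    simp only [Pi.mul_apply, mul_one, ENNReal.one_rpow, lintegral_const, one_mul,
      Measure.restrict_apply, MeasurableSet.univ, Set.univ_inter] at h2
    have h3 : ∫⁻ z in ball x₀ ((2:ℝ) ^ (ℓ+2) * r), (ENNReal.ofReal |f z|) ^ p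
        ≤ ENNReal.ofReal (M ^ p * Φ (2 ^ (ℓ+2) * r)) := hMorrey x₀ _ hs
    have h4 : ∫⁻ z in ball x₀ ((2:ℝ) ^ (ℓ+2) * r), ENNReal.ofReal |h z|
        ≤ ENNReal.ofReal ((M ^ p * Φ (2 ^ (ℓ+2) * r)) ^ (1/p))
          * ENNReal.ofReal (((2 ^ (ℓ+2) * r) ^ n * v) ^ (1/q)) := by
      refine h1.trans (h2.trans ?_)
      rw [hvol, ENNReal.ofReal_rpow_of_pos hsnv]
      refine mul_le_mul_left ?_ _
      rw [← ENNReal.ofReal_rpow_of_nonneg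
        (mul_nonneg (Real.rpow_nonneg hM p) (hΦpos _ hs).le) (by positivity)]
      exact ENNReal.rpow_le_rpow h3 (by positivity)
    have h5 : (volume (ball x₀ ((2:ℝ) ^ (ℓ+2) * r)))⁻¹
        = ENNReal.ofReal (((2 ^ (ℓ+2) * r) ^ n * v)⁻¹) := by
      rw [hvol, ENNReal.ofReal_inv_of_pos hsnv]
    calc (volume (ball x₀ ((2:ℝ) ^ (ℓ+2) * r)))⁻¹ *
          ∫⁻ z in ball x₀ ((2:ℝ) ^ (ℓ+2) * r), ENNReal.ofReal |h z|
        ≤ ENNReal.ofReal (((2 ^ (ℓ+2) * r) ^ n * v)⁻¹) *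
          (ENNReal.ofReal ((M ^ p * Φ (2 ^ (ℓ+2) * r)) ^ (1/p))
            * ENNReal.ofReal (((2 ^ (ℓ+2) * r) ^ n * v) ^ (1/q))) := by
          rw [h5]; exact mul_le_mul_right h4 _
      _ = ENNReal.ofReal ((((2:ℝ) ^ (ℓ+2) * r) ^ n * v)⁻¹ *
            ((M ^ p * Φ (2 ^ (ℓ+2) * r)) ^ (1/p) * ((2 ^ (ℓ+2) * r) ^ n * v) ^ (1/q))) := by
          rw [ENNReal.ofReal_mul (by positivity), ENNReal.ofReal_mul
            (Real.rpow_nonneg (mul_nonneg (Real.rpow_nonneg hM p) (hΦpos _ hs).le) _)]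
      _ ≤ ENNReal.ofReal ((M * Φ r ^ (1/p) * (r ^ n * v) ^ (-(1/p))) * θ ^ (ℓ+2)) := by
          apply ENNReal.ofReal_le_ofReal
          have hrw : ((2:ℝ) ^ (ℓ+2) * r) ^ n * v = ((2:ℝ) ^ n) ^ (ℓ+2) * (r ^ n * v) := by
            rw [mul_pow, ← pow_mul, ← pow_mul, mul_comm n (ℓ+2)]; ring
          rw [hrw, hθdef]
          exact aux_real (ℓ+2) hp hq' hDpos h2npos (by positivity) hM
            (hΦpos _ hs).le (hΦpos r hr).le (hΦpow (ℓ+2) r hr)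
      _ = ENNReal.ofReal (M * Φ r ^ (1/p) * (r ^ n * v) ^ (-(1/p))) *
            ENNReal.ofReal θ ^ (ℓ+2) := by
          rw [ENNReal.ofReal_mul hc₀nn, ENNReal.ofReal_pow hθpos.le]
  have hinv : (1 - ENNReal.ofReal θ)⁻¹ = ENNReal.ofReal S := by
    rw [hSdef, ENNReal.ofReal_inv_of_pos (by linarith), ENNReal.ofReal_sub _ hθpos.le,
      ENNReal.ofReal_one]
  have hThx : ∀ x ∈ ball x₀ r,
      T h x ≤ ENNReal.ofReal (K2 * (M * Φ r ^ (1/p) * (r ^ n * v) ^ (-(1/p)))) := by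
    intro x hx
    calc T h x ≤ ENNReal.ofReal CT * ∑' ℓ : ℕ,
          (volume (ball x₀ (2 ^ (ℓ + 2) * r)))⁻¹ *
            ∫⁻ z in ball x₀ (2 ^ (ℓ + 2) * r), ENNReal.ofReal |h z| :=
        hTloc x₀ r hr h hhmeas hzero x hx
      _ ≤ ENNReal.ofReal CT * ∑' ℓ : ℕ,
          ENNReal.ofReal (M * Φ r ^ (1/p) * (r ^ n * v) ^ (-(1/p))) *
            ENNReal.ofReal θ ^ (ℓ + 2) :=
        mul_le_mul_right (ENNReal.tsum_le_tsum hterm) _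
      _ = ENNReal.ofReal CT * (ENNReal.ofReal (M * Φ r ^ (1/p) * (r ^ n * v) ^ (-(1/p))) *
            ((∑' ℓ : ℕ, ENNReal.ofReal θ ^ ℓ) * ENNReal.ofReal θ ^ 2)) := by
          rw [ENNReal.tsum_mul_left]
          congr 2
          simp_rw [pow_add]
          rw [ENNReal.tsum_mul_right]
      _ = ENNReal.ofReal CT * (ENNReal.ofReal (M * Φ r ^ (1/p) * (r ^ n * v) ^ (-(1/p))) *
            (ENNReal.ofReal S * ENNReal.ofReal (θ ^ 2))) := by
          rw [ENNReal.tsum_geometric, hinv, ENNReal.ofReal_pow hθpos.le]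
      _ = ENNReal.ofReal (K2 * (M * Φ r ^ (1/p) * (r ^ n * v) ^ (-(1/p)))) := by
          rw [← ENNReal.ofReal_mul hSpos.le, ← ENNReal.ofReal_mul hc₀nn,
            ← ENNReal.ofReal_mul hCT.le]
          congr 1
          rw [hK2def]
          ring
  have hIh : ∫⁻ x in ball x₀ r, (T h x) ^ p ≤ ENNReal.ofReal (K2 ^ p * (M ^ p * Φ r)) := by
    have hWnn : 0 ≤ K2 * (M * Φ r ^ (1/p) * (r ^ n * v) ^ (-(1/p))) :=
      mul_nonneg hK2pos.le hc₀nn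
    have hpt : ∀ x ∈ ball x₀ r, (T h x) ^ p
        ≤ ENNReal.ofReal ((K2 * (M * Φ r ^ (1/p) * (r ^ n * v) ^ (-(1/p)))) ^ p) := by
      intro x hx
      rw [← ENNReal.ofReal_rpow_of_nonneg hWnn hp0.le]
      exact ENNReal.rpow_le_rpow (hThx x hx) hp0.le
    calc ∫⁻ x in ball x₀ r, (T h x) ^ p
        ≤ ∫⁻ _ in ball x₀ r,
            ENNReal.ofReal ((K2 * (M * Φ r ^ (1/p) * (r ^ n * v) ^ (-(1/p)))) ^ p) :=
          setLIntegral_mono measurable_const hpt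
      _ = ENNReal.ofReal ((K2 * (M * Φ r ^ (1/p) * (r ^ n * v) ^ (-(1/p)))) ^ p) *
            volume (ball x₀ r) := setLIntegral_const _ _
      _ = ENNReal.ofReal ((K2 * (M * Φ r ^ (1/p) * (r ^ n * v) ^ (-(1/p)))) ^ p *
            (r ^ n * v)) := by
          rw [hball x₀ r hr, ← ENNReal.ofReal_mul (Real.rpow_nonneg
            (mul_nonneg hK2pos.le hc₀nn) _)]
      _ = ENNReal.ofReal (K2 ^ p * (M ^ p * Φ r)) := by
          rw [aux_real2 hp hK2pos.le hM (hΦpos r hr).le (by positivity)]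
  -- combine
  have h2top : (2:ℝ≥0∞) ^ (p-1) ≠ ∞ :=
    ENNReal.rpow_ne_top_of_nonneg (by linarith) ENNReal.ofNat_ne_top
  calc ∫⁻ x in ball x₀ r, (T f x) ^ p
      ≤ ∫⁻ x in ball x₀ r, 2 ^ (p-1) * ((T g x) ^ p + (T h x) ^ p) :=
        lintegral_mono hstep
    _ = 2 ^ (p-1) * ((∫⁻ x in ball x₀ r, (T g x) ^ p) + ∫⁻ x in ball x₀ r, (T h x) ^ p) := by
        rw [lintegral_const_mul' _ _ h2top,
          lintegral_add_left ((hTmeas g hgmeas).pow measurable_const)]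
    _ ≤ 2 ^ (p-1) * (ENNReal.ofReal (A * D * (M ^ p * Φ r)) +
          ENNReal.ofReal (K2 ^ p * (M ^ p * Φ r))) :=
        mul_le_mul_right (add_le_add hIg hIh) _
    _ = ENNReal.ofReal (Cb * (M ^ p * Φ r)) := by
        have h2 : (2:ℝ≥0∞) ^ (p-1) = ENNReal.ofReal ((2:ℝ) ^ (p-1)) := by
          rw [← ENNReal.ofReal_rpow_of_pos two_pos, ENNReal.ofReal_ofNat]
        rw [h2, ← ENNReal.ofReal_add (by positivity) (by positivity),
          ← ENNReal.ofReal_mul (by positivity)]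
        congr 1
        rw [hCbdef]
        ring
end

section
/- Let $B = B(x_0, r_B) \subset \mathbb{R}^n$ be a ball, and let $f \in L^1_{loc}(\mathbb{R}^n)$ vanish on $2B$. Then for every $x \in B$, the intrinsic square function satisfies the pointwise bound $\mathcal{S}_\alpha(f)(x) \le C_n \sum_{\ell=1}^\infty \frac{1}{|2^{\ell+1}B|}\int_{2^{\ell+1}B \setminus 2^\ell B} |f(z)|\,dz$, where $C_n$ depends only on $n$ and $\alpha \in (0,1]$. -/
open MeasureTheory Metric ENNReal

/-- The family `𝒞_α` of mean-zero functions supported in the unit ball that are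
Hölder continuous of order `α` with constant `1`. -/
def holderClass (n : ℕ) (α : ℝ) : Set (EuclideanSpace ℝ (Fin n) → ℝ) :=
  {φ | Function.support φ ⊆ closedBall 0 1 ∧ (∫ x, φ x) = 0 ∧
    ∀ x x', |φ x - φ x'| ≤ ‖x - x'‖ ^ α}

/-- `A_α(f)(y,t) = sup_{φ ∈ 𝒞_α} |f * φ_t(y)|`. -/
noncomputable def intrinsicA (n : ℕ) (α : ℝ) (f : EuclideanSpace ℝ (Fin n) → ℝ)
    (y : EuclideanSpace ℝ (Fin n)) (t : ℝ) : ℝ≥0∞ :=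
  ⨆ φ ∈ holderClass n α, ENNReal.ofReal |∫ z, φ (t⁻¹ • (y - z)) / t ^ n * f z|

/-- The intrinsic square function `𝒮_α(f)`. -/
noncomputable def intrinsicS (n : ℕ) (α : ℝ) (f : EuclideanSpace ℝ (Fin n) → ℝ)
    (x : EuclideanSpace ℝ (Fin n)) : ℝ≥0∞ :=
  (∫⁻ p : EuclideanSpace ℝ (Fin n) × ℝ in {p | dist x p.1 < p.2},
      (intrinsicA n α f p.1 p.2) ^ 2 / ENNReal.ofReal (p.2 ^ (n + 1))) ^ ((1 : ℝ) / 2)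

lemma holder_abs_le {n : ℕ} (hn : 1 ≤ n) {α : ℝ} (hα1 : α ≤ 1)
    {φ : EuclideanSpace ℝ (Fin n) → ℝ} (hφ : φ ∈ holderClass n α)
    (w : EuclideanSpace ℝ (Fin n)) : |φ w| ≤ 3 := by
  obtain ⟨hsupp, -, hHol⟩ := hφ
  by_cases hw : ‖w‖ ≤ 1
  · set e : EuclideanSpace ℝ (Fin n) := (3 : ℝ) • EuclideanSpace.single ⟨0, hn⟩ (1:ℝ) with he
    have hne : ‖e‖ = 3 := by
      rw [he, norm_smul, EuclideanSpace.norm_single]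
      norm_num
    have hout : φ (w + e) = 0 := by
      have : w + e ∉ closedBall (0 : EuclideanSpace ℝ (Fin n)) 1 := by
        simp only [mem_closedBall, dist_zero_right, not_le]
        have h1 : ‖e‖ ≤ ‖w + e‖ + ‖w‖ := by
          simpa using norm_sub_le (w + e) w
        rw [hne] at h1
        linarith
      by_contra h
      exact this (hsupp (Function.mem_support.2 h))
    calc |φ w| = |φ w - φ (w + e)| := by rw [hout, sub_zero]
    _ ≤ ‖w - (w + e)‖ ^ α := hHol _ _
    _ = (3 : ℝ) ^ α := by rw [sub_add_cancel_left, norm_neg, hne]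
    _ ≤ (3 : ℝ) ^ (1 : ℝ) := by
        apply Real.rpow_le_rpow_of_exponent_le (by norm_num) hα1
    _ ≤ 3 := by norm_num
  · have : φ w = 0 := by
      by_contra h
      exact hw (by simpa using hsupp (Function.mem_support.2 h))
    simp [this]

lemma exists_dyadic {u : ℝ} (hu : 2 ≤ u) : ∃ ℓ : ℕ, 2 ^ (ℓ + 1) ≤ u ∧ u < 2 ^ (ℓ + 2) := by
  obtain ⟨m, hm1, hm2⟩ := exists_nat_pow_near (le_trans (by norm_num) hu) (by norm_num : (1:ℝ) < 2)
  match m, hm1, hm2 with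
  | 0, hm1, hm2 => exfalso; norm_num at hm2; linarith
  | (ℓ+1), hm1, hm2 => exact ⟨ℓ, hm1, hm2⟩

lemma region_lintegral {n : ℕ} (x : EuclideanSpace ℝ (Fin n)) (h : ℝ → ℝ≥0∞)
    (hh : Measurable h) :
    ∫⁻ p : EuclideanSpace ℝ (Fin n) × ℝ in {p | dist x p.1 < p.2}, h p.2
      = ∫⁻ t : ℝ, h t * volume (ball x t) := by
  have hR : MeasurableSet {p : EuclideanSpace ℝ (Fin n) × ℝ | dist x p.1 < p.2} :=
    measurableSet_lt (measurable_const.dist measurable_fst) measurable_snd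
  have hm : Measurable fun p : EuclideanSpace ℝ (Fin n) × ℝ => h p.2 :=
    hh.comp measurable_snd
  rw [← lintegral_indicator hR _, Measure.volume_eq_prod,
    lintegral_prod_symm _ ((hm.indicator hR).aemeasurable)]
  refine lintegral_congr fun t => ?_
  have : ∀ y : EuclideanSpace ℝ (Fin n),
      Set.indicator {p : EuclideanSpace ℝ (Fin n) × ℝ | dist x p.1 < p.2}
        (fun p => h p.2) (y, t) = Set.indicator (ball x t) (fun _ => h t) y := by
    intro y
    by_cases hy : dist x y < t
    · rw [Set.indicator_of_mem (by simpa using hy),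
        Set.indicator_of_mem (by simp [mem_ball, dist_comm]; exact hy)]
    · rw [Set.indicator_of_notMem (by simpa using hy),
        Set.indicator_of_notMem (by simpa [mem_ball, dist_comm] using hy)]
  rw [lintegral_congr this, lintegral_indicator measurableSet_ball _, setLIntegral_const]

lemma tail_lintegral {n : ℕ} (hn : 1 ≤ n) {T : ℝ} (hT : 0 < T) :
    ∫⁻ t in Set.Ioi T, ENNReal.ofReal (9 * t ^ (-(2 * (n:ℝ) + 1)))
      ≤ ENNReal.ofReal (9 * T ^ (-(2 * (n:ℝ)))) := by
  have hn' : (1:ℝ) ≤ n := by exact_mod_cast hn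
  have hr : (-(2 * (n:ℝ) + 1)) < -1 := by linarith
  have hint : IntegrableOn (fun t : ℝ => 9 * t ^ (-(2 * (n:ℝ) + 1))) (Set.Ioi T) :=
    (integrableOn_Ioi_rpow_of_lt hr hT).const_mul 9
  have hpos : 0 ≤ᵐ[volume.restrict (Set.Ioi T)]
      fun t : ℝ => 9 * t ^ (-(2 * (n:ℝ) + 1)) := by
    filter_upwards [self_mem_ae_restrict measurableSet_Ioi] with t ht
    have h1 : 0 < t := hT.trans ht
    positivity
  rw [← ofReal_integral_eq_lintegral_ofReal hint hpos]
  apply ENNReal.ofReal_le_ofReal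
  rw [MeasureTheory.integral_const_mul, integral_Ioi_rpow_of_lt hr hT]
  have he : -(2 * (n:ℝ) + 1) + 1 = -(2*n) := by ring
  rw [he]
  have hTn : (0:ℝ) ≤ T ^ (-(2*(n:ℝ))) := Real.rpow_nonneg hT.le _
  have h1 : -T ^ (-(2*(n:ℝ))) / -(2*(n:ℝ)) = T ^ (-(2*(n:ℝ))) / (2*n) := by
    rw [neg_div_neg_eq]
  have h2 : T ^ (-(2*(n:ℝ))) / (2*(n:ℝ)) ≤ T ^ (-(2*(n:ℝ))) :=
    div_le_self hTn (by linarith)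
  rw [h1]
  nlinarith

set_option maxHeartbeats 1000000 in
theorem stmt15 {n : ℕ} (hn : 1 ≤ n) (α : ℝ) (hα0 : 0 < α) (hα1 : α ≤ 1) :
    ∃ C > 0, ∀ (x₀ : EuclideanSpace ℝ (Fin n)) (rB : ℝ), 0 < rB →
      ∀ f : EuclideanSpace ℝ (Fin n) → ℝ, LocallyIntegrable f →
      (∀ x ∈ ball x₀ (2 * rB), f x = 0) → ∀ x ∈ ball x₀ rB,
        intrinsicS n α f x ≤ ENNReal.ofReal C * ∑' ℓ : ℕ,
          (volume (ball x₀ (2 ^ (ℓ + 2) * rB)))⁻¹ *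
            ∫⁻ z in ball x₀ (2 ^ (ℓ + 2) * rB) \ ball x₀ (2 ^ (ℓ + 1) * rB),
              ENNReal.ofReal |f z| := by
  classical
  haveI : Nonempty (Fin n) := ⟨⟨0, hn⟩⟩
  set v : ℝ≥0∞ := volume (ball (0 : EuclideanSpace ℝ (Fin n)) 1) with hv
  have hv0 : v ≠ 0 := (measure_ball_pos volume 0 one_pos).ne'
  have hvt : v ≠ ⊤ := measure_ball_lt_top.ne
  set V : ℝ := v.toReal with hV
  have hV0 : 0 < V := ENNReal.toReal_pos hv0 hvt
  set Q : ℝ := 9 * 4 ^ n with hQdef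
  have hQ0 : 0 < Q := by rw [hQdef]; positivity
  refine ⟨Real.sqrt (V * Q) * V * 4 ^ n + 1, by positivity, ?_⟩
  intro x₀ rB hrB f hf hfz x hx
  have hxx₀ : dist x x₀ < rB := mem_ball.1 hx
  set a : ℕ → ℝ≥0∞ := fun ℓ =>
    ∫⁻ z in ball x₀ (2 ^ (ℓ + 2) * rB) \ ball x₀ (2 ^ (ℓ + 1) * rB),
      ENNReal.ofReal |f z| with ha
  set T : ℕ → ℝ := fun ℓ => 2 ^ (ℓ + 1) * rB / 4 with hT
  have hTpos : ∀ ℓ, 0 < T ℓ := by intro ℓ; simp only [hT]; positivity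
  set e : ℕ → ℝ → ℝ≥0∞ := fun ℓ => (Set.Ioi (T ℓ)).indicator fun _ => 1 with he
  set c : ℝ → ℝ≥0∞ :=
    fun t => (ENNReal.ofReal (3 / t ^ n)) ^ 2 * (ENNReal.ofReal (t ^ (n + 1)))⁻¹ with hc
  set g : ℕ → ℕ → ℝ → ℝ≥0∞ := fun ℓ m t => e ℓ t * e m t * c t with hgdef
  have hmeas_e : ∀ ℓ, Measurable (e ℓ) := by
    intro ℓ; rw [he]; exact measurable_const.indicator measurableSet_Ioi
  have hmeas_c : Measurable c := by
    rw [hc]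
    apply Measurable.mul
    · exact (ENNReal.measurable_ofReal.comp
        (measurable_const.div (measurable_id.pow_const n))).pow_const 2
    · exact (ENNReal.measurable_ofReal.comp (measurable_id.pow_const (n+1))).inv
  have hmeas_g : ∀ ℓ m, Measurable (g ℓ m) := by
    intro ℓ m; rw [hgdef]
    exact ((hmeas_e ℓ).mul (hmeas_e m)).mul hmeas_c
  have hfabs : AEMeasurable (fun z => ENNReal.ofReal |f z|) volume := by
    have h1 : AEMeasurable (fun z => |f z|) volume :=
      continuous_abs.measurable.comp_aemeasurable hf.aestronglyMeasurable.aemeasurable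
    exact h1.ennreal_ofReal
  have hgs : ∀ ℓ m : ℕ, Measurable fun p : EuclideanSpace ℝ (Fin n) × ℝ => g ℓ m p.2 :=
    fun ℓ m => (hmeas_g ℓ m).comp measurable_snd
  -- Step A : pointwise bound on the intrinsic square function kernel
  have hA : ∀ (y : EuclideanSpace ℝ (Fin n)) (t : ℝ), dist x y < t →
      intrinsicA n α f y t ≤ ENNReal.ofReal (3 / t ^ n) * ∑' ℓ, e ℓ t * a ℓ := by
    intro y t hyt
    have ht : 0 < t := lt_of_le_of_lt dist_nonneg hyt
    set D : Set (EuclideanSpace ℝ (Fin n)) := ball x₀ (4 * t) \ ball x₀ (2 * rB) with hD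
    have hDm : MeasurableSet D := measurableSet_ball.diff measurableSet_ball
    have h1 : intrinsicA n α f y t
        ≤ ENNReal.ofReal (3 / t ^ n) * ∫⁻ z in D, ENNReal.ofReal |f z| := by
      apply iSup₂_le
      intro φ hφ
      have hptw : ∀ z, (‖φ (t⁻¹ • (y - z)) / t ^ n * f z‖₊ : ℝ≥0∞)
          ≤ D.indicator (fun z => ENNReal.ofReal (3 / t ^ n) * ENNReal.ofReal |f z|) z := by
        intro z
        rw [← enorm_eq_nnnorm, Real.enorm_eq_ofReal_abs]
        by_cases hzD : z ∈ D
        · rw [Set.indicator_of_mem hzD, ← ENNReal.ofReal_mul (by positivity)]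
          apply ENNReal.ofReal_le_ofReal
          rw [abs_mul, abs_div, abs_of_pos (pow_pos ht n)]
          have hb := holder_abs_le hn hα1 hφ (t⁻¹ • (y - z))
          gcongr
        · rw [Set.indicator_of_notMem hzD]
          have hzero : φ (t⁻¹ • (y - z)) / t ^ n * f z = 0 := by
            by_cases hz2 : z ∈ ball x₀ (2 * rB)
            · rw [hfz z hz2, mul_zero]
            · have hφ0 : φ (t⁻¹ • (y - z)) = 0 := by
                by_contra h0
                have hmem := hφ.1 (Function.mem_support.2 h0)
                rw [mem_closedBall, dist_zero_right, norm_smul, norm_inv,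
                  Real.norm_eq_abs, abs_of_pos ht] at hmem
                have hyz : ‖y - z‖ ≤ t := by
                  calc ‖y - z‖ = t * (t⁻¹ * ‖y - z‖) := by field_simp
                    _ ≤ t * 1 := mul_le_mul_of_nonneg_left hmem ht.le
                    _ = t := mul_one t
                have h2 : dist z y ≤ t := by
                  rw [dist_comm, dist_eq_norm]; exact hyz
                have h3 : dist y x₀ < t + rB := by
                  calc dist y x₀ ≤ dist y x + dist x x₀ := dist_triangle y x x₀
                    _ < t + rB := by rw [dist_comm y x]; exact add_lt_add hyt hxx₀
                have hzx₀ : dist z x₀ < 2 * t + rB := by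
                  calc dist z x₀ ≤ dist z y + dist y x₀ := dist_triangle z y x₀
                    _ < t + (t + rB) := add_lt_add_of_le_of_lt h2 h3
                    _ = 2 * t + rB := by ring
                rcases le_or_gt t (rB / 2) with hcase | hcase
                · exact hz2 (mem_ball.2 (by linarith))
                · exact hzD ⟨mem_ball.2 (by linarith), hz2⟩
              rw [hφ0, zero_div, zero_mul]
          rw [hzero]
          simp
      calc ENNReal.ofReal |∫ z, φ (t⁻¹ • (y - z)) / t ^ n * f z|
          = (‖∫ z, φ (t⁻¹ • (y - z)) / t ^ n * f z‖₊ : ℝ≥0∞) :=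
            (Real.enorm_eq_ofReal_abs _).symm
        _ ≤ ∫⁻ z, (‖φ (t⁻¹ • (y - z)) / t ^ n * f z‖₊ : ℝ≥0∞) :=
            enorm_integral_le_lintegral_enorm _
        _ ≤ ∫⁻ z, D.indicator
              (fun z => ENNReal.ofReal (3 / t ^ n) * ENNReal.ofReal |f z|) z :=
            lintegral_mono hptw
        _ = ∫⁻ z in D, ENNReal.ofReal (3 / t ^ n) * ENNReal.ofReal |f z| :=
            lintegral_indicator hDm _
        _ = ENNReal.ofReal (3 / t ^ n) * ∫⁻ z in D, ENNReal.ofReal |f z| :=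
            lintegral_const_mul'' _ hfabs.restrict
    refine h1.trans (mul_le_mul_right ?_ _)
    set S : ℕ → Set (EuclideanSpace ℝ (Fin n)) := fun ℓ =>
      if T ℓ < t then ball x₀ (2 ^ (ℓ + 2) * rB) \ ball x₀ (2 ^ (ℓ + 1) * rB) else ∅
      with hSdef
    have hsub : D ⊆ ⋃ ℓ, S ℓ := by
      intro z hz
      obtain ⟨hz4, hz2⟩ := hz
      rw [mem_ball] at hz4
      have hz2' : 2 * rB ≤ dist z x₀ := not_lt.1 fun h => hz2 (mem_ball.2 h)
      have hu : 2 ≤ dist z x₀ / rB := (le_div_iff₀ hrB).2 (by linarith)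
      obtain ⟨ℓ, hl1, hl2⟩ := exists_dyadic hu
      have hl1' : 2 ^ (ℓ + 1) * rB ≤ dist z x₀ := (le_div_iff₀ hrB).1 hl1
      have hl2' : dist z x₀ < 2 ^ (ℓ + 2) * rB := (div_lt_iff₀ hrB).1 hl2
      refine Set.mem_iUnion.2 ⟨ℓ, ?_⟩
      have hcond : T ℓ < t := by
        simp only [hT]
        have h5 : 2 ^ (ℓ + 1) * rB < 4 * t := lt_of_le_of_lt hl1' hz4
        linarith
      simp only [hSdef, if_pos hcond]
      exact ⟨mem_ball.2 hl2', fun hmem => absurd (mem_ball.1 hmem) (not_lt.2 hl1')⟩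
    calc ∫⁻ z in D, ENNReal.ofReal |f z|
        ≤ ∫⁻ z in ⋃ ℓ, S ℓ, ENNReal.ofReal |f z| := lintegral_mono_set hsub
      _ ≤ ∑' ℓ, ∫⁻ z in S ℓ, ENNReal.ofReal |f z| := lintegral_iUnion_le _ _
      _ = ∑' ℓ, e ℓ t * a ℓ := by
          refine tsum_congr fun ℓ => ?_
          by_cases hcond : T ℓ < t
          · simp only [hSdef, if_pos hcond, he,
              Set.indicator_of_mem (Set.mem_Ioi.2 hcond), one_mul, ha]
          · simp only [hSdef, if_neg hcond, he,
              Set.indicator_of_notMem (by simpa using hcond : t ∉ Set.Ioi (T ℓ)), zero_mul,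
              Measure.restrict_empty, lintegral_zero_measure]
  have hR : MeasurableSet {p : EuclideanSpace ℝ (Fin n) × ℝ | dist x p.1 < p.2} :=
    measurableSet_lt (measurable_const.dist measurable_fst) measurable_snd
  -- Step B : expand square and exchange sums with the integral
  have key : (∫⁻ p : EuclideanSpace ℝ (Fin n) × ℝ in {p | dist x p.1 < p.2},
      (intrinsicA n α f p.1 p.2) ^ 2 / ENNReal.ofReal (p.2 ^ (n + 1)))
      ≤ ∑' ℓ, ∑' m, a ℓ * (a m *
          ∫⁻ p : EuclideanSpace ℝ (Fin n) × ℝ in {p | dist x p.1 < p.2}, g ℓ m p.2) := by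
    have hpt : ∀ p ∈ {p : EuclideanSpace ℝ (Fin n) × ℝ | dist x p.1 < p.2},
        (intrinsicA n α f p.1 p.2) ^ 2 / ENNReal.ofReal (p.2 ^ (n + 1))
          ≤ ∑' ℓ, ∑' m, a ℓ * (a m * g ℓ m p.2) := by
      rintro ⟨y, t⟩ hp
      have hp' : dist x y < t := hp
      have h1 : intrinsicA n α f y t
          ≤ ENNReal.ofReal (3 / t ^ n) * ∑' ℓ, e ℓ t * a ℓ := hA y t hp'
      calc (intrinsicA n α f y t) ^ 2 / ENNReal.ofReal (t ^ (n + 1))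
          ≤ (ENNReal.ofReal (3 / t ^ n) * ∑' ℓ, e ℓ t * a ℓ) ^ 2
              / ENNReal.ofReal (t ^ (n + 1)) := by gcongr
        _ = ∑' ℓ, ∑' m, a ℓ * (a m * g ℓ m t) := ?_
      rw [div_eq_mul_inv, mul_pow]
      have hexp : (∑' ℓ, e ℓ t * a ℓ) ^ 2
          = ∑' ℓ, ∑' m, (e ℓ t * a ℓ) * (e m t * a m) := by
        rw [sq, ← ENNReal.tsum_mul_right]
        exact tsum_congr fun ℓ => (ENNReal.tsum_mul_left).symm
      rw [hexp]
      calc (ENNReal.ofReal (3 / t ^ n)) ^ 2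
            * (∑' ℓ, ∑' m, (e ℓ t * a ℓ) * (e m t * a m))
            * (ENNReal.ofReal (t ^ (n + 1)))⁻¹
          = ∑' ℓ, (ENNReal.ofReal (3 / t ^ n)) ^ 2
              * (∑' m, (e ℓ t * a ℓ) * (e m t * a m))
              * (ENNReal.ofReal (t ^ (n + 1)))⁻¹ := by
            symm; rw [ENNReal.tsum_mul_right, ENNReal.tsum_mul_left]
        _ = ∑' ℓ, ∑' m, (ENNReal.ofReal (3 / t ^ n)) ^ 2
              * ((e ℓ t * a ℓ) * (e m t * a m))
              * (ENNReal.ofReal (t ^ (n + 1)))⁻¹ := by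
            refine tsum_congr fun ℓ => ?_
            symm; rw [ENNReal.tsum_mul_right, ENNReal.tsum_mul_left]
        _ = ∑' ℓ, ∑' m, a ℓ * (a m * g ℓ m t) := by
            refine tsum_congr fun ℓ => tsum_congr fun m => ?_
            simp only [hgdef, hc]
            try ring
    have hmp : ∀ ℓ m, Measurable fun p : EuclideanSpace ℝ (Fin n) × ℝ =>
        a ℓ * (a m * g ℓ m p.2) := fun ℓ m =>
      (((hgs ℓ m)).const_mul (a m)).const_mul (a ℓ)
    calc (∫⁻ p : EuclideanSpace ℝ (Fin n) × ℝ in {p | dist x p.1 < p.2},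
        (intrinsicA n α f p.1 p.2) ^ 2 / ENNReal.ofReal (p.2 ^ (n + 1)))
        ≤ ∫⁻ p : EuclideanSpace ℝ (Fin n) × ℝ in {p | dist x p.1 < p.2},
            ∑' ℓ, ∑' m, a ℓ * (a m * g ℓ m p.2) := setLIntegral_mono' hR hpt
      _ = ∑' ℓ, ∫⁻ p : EuclideanSpace ℝ (Fin n) × ℝ in {p | dist x p.1 < p.2},
            ∑' m, a ℓ * (a m * g ℓ m p.2) :=
          lintegral_tsum fun ℓ =>
            (Measurable.ennreal_tsum fun m => hmp ℓ m).aemeasurable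
      _ = ∑' ℓ, ∑' m, ∫⁻ p : EuclideanSpace ℝ (Fin n) × ℝ in {p | dist x p.1 < p.2},
            a ℓ * (a m * g ℓ m p.2) :=
          tsum_congr fun ℓ => lintegral_tsum fun m => (hmp ℓ m).aemeasurable
      _ = ∑' ℓ, ∑' m, a ℓ * (a m *
            ∫⁻ p : EuclideanSpace ℝ (Fin n) × ℝ in {p | dist x p.1 < p.2}, g ℓ m p.2) := by
          refine tsum_congr fun ℓ => tsum_congr fun m => ?_
          rw [lintegral_const_mul (a ℓ) ((hgs ℓ m).const_mul (a m)),
            lintegral_const_mul (a m) (hgs ℓ m)]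
  -- Step C : bound the elementary integrals J(ℓ, m)
  have hJ : ∀ ℓ m : ℕ, (∫⁻ p : EuclideanSpace ℝ (Fin n) × ℝ in {p | dist x p.1 < p.2},
      g ℓ m p.2)
      ≤ v * ENNReal.ofReal (Q * ((((2:ℝ)^ℓ * rB)^n)⁻¹ * (((2:ℝ)^m * rB)^n)⁻¹)) := by
    intro ℓ m
    rw [region_lintegral x _ (hmeas_g ℓ m)]
    set M := max ℓ m with hM
    have hTM : max (T ℓ) (T m) = T M := by
      have hmono : ∀ i j : ℕ, i ≤ j → T i ≤ T j := by
        intro i j hij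
        simp only [hT]
        have h2 : (2:ℝ)^(i+1) ≤ 2^(j+1) := by
          apply pow_le_pow_right₀ (by norm_num) (by omega)
        have h3 := mul_le_mul_of_nonneg_right h2 hrB.le
        linarith
      rcases le_total ℓ m with h | h
      · rw [hM, max_eq_right h, max_eq_right (hmono _ _ h)]
      · rw [hM, max_eq_left h, max_eq_left (hmono _ _ h)]
    have hTM0 : 0 < T M := hTpos M
    have step1 : ∀ t : ℝ, g ℓ m t * volume (ball x t)
        = (Set.Ioi (T M)).indicator (fun t => c t * volume (ball x t)) t := by
      intro t
      by_cases h1 : t ∈ Set.Ioi (T M)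
      · have hl : T ℓ < t ∧ T m < t := by
          rw [Set.mem_Ioi, ← hTM, max_lt_iff] at h1; exact h1
        rw [Set.indicator_of_mem h1]
        simp only [hgdef, he, Set.indicator_of_mem (Set.mem_Ioi.2 hl.1),
          Set.indicator_of_mem (Set.mem_Ioi.2 hl.2), one_mul]
      · rw [Set.indicator_of_notMem h1]
        rw [Set.mem_Ioi, not_lt, ← hTM] at h1
        rcases le_max_iff.1 h1 with h2 | h2
        · simp only [hgdef, he,
            Set.indicator_of_notMem (by simpa using not_lt.2 h2 : t ∉ Set.Ioi (T ℓ)),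
            zero_mul]
        · simp only [hgdef, he,
            Set.indicator_of_notMem (by simpa using not_lt.2 h2 : t ∉ Set.Ioi (T m)),
            mul_zero, zero_mul]
    rw [lintegral_congr step1, lintegral_indicator measurableSet_Ioi _]
    have step2 : ∀ t ∈ Set.Ioi (T M), c t * volume (ball x t)
        = v * ENNReal.ofReal (9 * t ^ (-(2 * (n:ℝ) + 1))) := by
      intro t ht'
      have ht : 0 < t := hTM0.trans ht'
      have hvol : volume (ball x t) = ENNReal.ofReal (t ^ n) * v := by
        rw [Measure.addHaar_ball volume x ht.le, finrank_euclideanSpace_fin, ← hv]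
      have hreal : (3 / t ^ n) ^ 2 * (t ^ (n + 1))⁻¹ * t ^ n
          = 9 * t ^ (-(2 * (n:ℝ) + 1)) := by
        rw [Real.rpow_neg ht.le, show (2 * (n:ℝ) + 1) = ((2 * n + 1 : ℕ) : ℝ) by
          push_cast; ring, Real.rpow_natCast]
        have hne : t ≠ 0 := ht.ne'
        field_simp
        ring
      calc c t * volume (ball x t)
          = ENNReal.ofReal ((3 / t ^ n) ^ 2) * ENNReal.ofReal ((t ^ (n + 1))⁻¹)
              * (ENNReal.ofReal (t ^ n) * v) := by
            rw [hvol]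
            simp only [hc]
            rw [← ENNReal.ofReal_pow (by positivity), ENNReal.ofReal_inv_of_pos (by positivity)]
        _ = ENNReal.ofReal ((3 / t ^ n) ^ 2 * (t ^ (n + 1))⁻¹ * t ^ n) * v := by
            rw [ENNReal.ofReal_mul (by positivity : (0:ℝ) ≤ (3 / t ^ n) ^ 2 * (t ^ (n + 1))⁻¹),
              ENNReal.ofReal_mul (by positivity : (0:ℝ) ≤ (3 / t ^ n) ^ 2)]
            ring
        _ = v * ENNReal.ofReal (9 * t ^ (-(2 * (n:ℝ) + 1))) := by rw [hreal, mul_comm]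
    rw [setLIntegral_congr_fun measurableSet_Ioi step2,
      lintegral_const_mul' v _ hvt]
    refine mul_le_mul_right ((tail_lintegral hn hTM0).trans ?_) v
    apply ENNReal.ofReal_le_ofReal
    -- 9 * (T M) ^ (-(2n)) ≤ Q * (bℓ * bm)
    have h1 : T M ^ (-(2 * (n:ℝ))) = (T M ^ (2 * n : ℕ))⁻¹ := by
      rw [show -(2 * (n:ℝ)) = -((2 * n : ℕ) : ℝ) by push_cast; ring,
        Real.rpow_neg hTM0.le, Real.rpow_natCast]
    have hbase : ((2:ℝ)^ℓ * rB) * ((2:ℝ)^m * rB) ≤ 4 * (T M) ^ 2 := by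
      simp only [hT]
      have h2M : (2:ℝ)^ℓ * 2^m ≤ ((2:ℝ)^M)^2 := by
        rw [← pow_add, ← pow_mul]
        apply pow_le_pow_right₀ (by norm_num)
        omega
      have h4 : 4 * ((2:ℝ)^(M+1) * rB / 4)^2 = ((2:ℝ)^M)^2 * rB^2 := by
        rw [pow_succ]; ring
      rw [h4]
      nlinarith [sq_nonneg rB, mul_le_mul_of_nonneg_right h2M (sq_nonneg rB)]
    have hkey : ((2:ℝ)^ℓ * rB)^n * ((2:ℝ)^m * rB)^n ≤ 4^n * (T M)^(2*n) := by
      rw [← mul_pow, pow_mul, ← mul_pow]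
      exact pow_le_pow_left₀ (by positivity) hbase n
    have hP : (0:ℝ) < ((2:ℝ)^ℓ * rB)^n := by positivity
    have hPm : (0:ℝ) < ((2:ℝ)^m * rB)^n := by positivity
    have hfour : (0:ℝ) < (4:ℝ)^n := by positivity
    have hstep : (T M ^ (2*n : ℕ))⁻¹
        ≤ 4^n * ((((2:ℝ)^ℓ * rB)^n)⁻¹ * (((2:ℝ)^m * rB)^n)⁻¹) := by
      have hrw : (4:ℝ)^n * ((((2:ℝ)^ℓ * rB)^n)⁻¹ * (((2:ℝ)^m * rB)^n)⁻¹)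
          = (((2:ℝ)^ℓ * rB)^n * ((2:ℝ)^m * rB)^n / 4^n)⁻¹ := by
        field_simp
      rw [hrw]
      apply inv_anti₀
      · positivity
      · rw [div_le_iff₀ hfour]
        calc ((2:ℝ)^ℓ * rB)^n * ((2:ℝ)^m * rB)^n ≤ 4^n * (T M)^(2*n) := hkey
          _ = T M ^ (2*n : ℕ) * 4^n := by ring
    calc 9 * T M ^ (-(2*(n:ℝ))) = 9 * (T M ^ (2*n : ℕ))⁻¹ := by rw [h1]
      _ ≤ 9 * (4^n * ((((2:ℝ)^ℓ * rB)^n)⁻¹ * (((2:ℝ)^m * rB)^n)⁻¹)) := by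
          have := hstep; nlinarith
      _ = Q * ((((2:ℝ)^ℓ * rB)^n)⁻¹ * (((2:ℝ)^m * rB)^n)⁻¹) := by
          rw [hQdef]; ring
  -- Step D : sum the bounds
  set b : ℕ → ℝ≥0∞ := fun ℓ => ENNReal.ofReal ((((2:ℝ)^ℓ * rB)^n)⁻¹) with hb
  set U : ℝ≥0∞ := ∑' ℓ, a ℓ * b ℓ with hU
  set W : ℝ≥0∞ := v * ENNReal.ofReal Q with hW
  have hsum : (∑' ℓ, ∑' m, a ℓ * (a m *
      ∫⁻ p : EuclideanSpace ℝ (Fin n) × ℝ in {p | dist x p.1 < p.2}, g ℓ m p.2))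
      ≤ W * U ^ 2 := by
    have h1 : ∀ ℓ m : ℕ, a ℓ * (a m *
        ∫⁻ p : EuclideanSpace ℝ (Fin n) × ℝ in {p | dist x p.1 < p.2}, g ℓ m p.2)
        ≤ W * ((a ℓ * b ℓ) * (a m * b m)) := by
      intro ℓ m
      calc a ℓ * (a m * ∫⁻ p : EuclideanSpace ℝ (Fin n) × ℝ in {p | dist x p.1 < p.2},
            g ℓ m p.2)
          ≤ a ℓ * (a m * (v * ENNReal.ofReal
              (Q * ((((2:ℝ)^ℓ * rB)^n)⁻¹ * (((2:ℝ)^m * rB)^n)⁻¹)))) := by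
            gcongr
            exact hJ ℓ m
        _ = W * ((a ℓ * b ℓ) * (a m * b m)) := by
            rw [hW, hb, ENNReal.ofReal_mul hQ0.le,
              ENNReal.ofReal_mul (by positivity : (0:ℝ) ≤ (((2:ℝ)^ℓ * rB)^n)⁻¹)]
            ring
    calc (∑' ℓ, ∑' m, a ℓ * (a m *
        ∫⁻ p : EuclideanSpace ℝ (Fin n) × ℝ in {p | dist x p.1 < p.2}, g ℓ m p.2))
        ≤ ∑' ℓ, ∑' m, W * ((a ℓ * b ℓ) * (a m * b m)) :=
          ENNReal.tsum_le_tsum fun ℓ => ENNReal.tsum_le_tsum fun m => h1 ℓ m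
      _ = ∑' ℓ, (W * (a ℓ * b ℓ)) * U := by
          refine tsum_congr fun ℓ => ?_
          calc (∑' m, W * ((a ℓ * b ℓ) * (a m * b m)))
              = ∑' m, (W * (a ℓ * b ℓ)) * (a m * b m) := tsum_congr fun m => by ring
            _ = (W * (a ℓ * b ℓ)) * ∑' m, a m * b m := ENNReal.tsum_mul_left
            _ = (W * (a ℓ * b ℓ)) * U := by rw [hU]
      _ = W * U ^ 2 := by
          rw [ENNReal.tsum_mul_right, ENNReal.tsum_mul_left, ← hU, sq]
          ring
  -- Step E : conclude
  have hShalf : intrinsicS n α f x ≤ W ^ ((1:ℝ)/2) * U := by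
    rw [intrinsicS]
    calc (∫⁻ p : EuclideanSpace ℝ (Fin n) × ℝ in {p | dist x p.1 < p.2},
          (intrinsicA n α f p.1 p.2) ^ 2 / ENNReal.ofReal (p.2 ^ (n + 1))) ^ ((1:ℝ)/2)
        ≤ (W * U ^ 2) ^ ((1:ℝ)/2) := ENNReal.rpow_le_rpow (key.trans hsum) (by norm_num)
      _ = W ^ ((1:ℝ)/2) * (U ^ 2) ^ ((1:ℝ)/2) := ENNReal.mul_rpow_of_nonneg _ _ (by norm_num)
      _ = W ^ ((1:ℝ)/2) * U := by
          congr 1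
          rw [← ENNReal.rpow_natCast U 2, ← ENNReal.rpow_mul]
          norm_num
  refine hShalf.trans ?_
  have hWhalf : W ^ ((1:ℝ)/2) = ENNReal.ofReal (Real.sqrt (V * Q)) := by
    rw [hW, ← ENNReal.ofReal_toReal hvt, ← hV, ← ENNReal.ofReal_mul hV0.le,
      ENNReal.ofReal_rpow_of_pos (by positivity), ← Real.sqrt_eq_rpow]
  have hterm : ∀ ℓ : ℕ, W ^ ((1:ℝ)/2) * (a ℓ * b ℓ)
      ≤ ENNReal.ofReal (Real.sqrt (V * Q) * V * 4 ^ n + 1)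
        * ((volume (ball x₀ (2 ^ (ℓ + 2) * rB)))⁻¹ * a ℓ) := by
    intro ℓ
    have hvol : volume (ball x₀ ((2:ℝ) ^ (ℓ + 2) * rB))
        = ENNReal.ofReal (((2:ℝ)^(ℓ+2)*rB)^n) * v := by
      rw [Measure.addHaar_ball volume x₀ (by positivity), finrank_euclideanSpace_fin, ← hv]
    have hvol0 : volume (ball x₀ ((2:ℝ) ^ (ℓ + 2) * rB)) ≠ 0 := by
      rw [hvol]
      exact mul_ne_zero (ENNReal.ofReal_pos.2 (by positivity)).ne' hv0
    have hvolt : volume (ball x₀ ((2:ℝ) ^ (ℓ + 2) * rB)) ≠ ⊤ := by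
      rw [hvol]
      exact ENNReal.mul_ne_top ENNReal.ofReal_ne_top hvt
    rw [hWhalf]
    have hre1 : ENNReal.ofReal (Real.sqrt (V*Q)) * (a ℓ * b ℓ)
        = (ENNReal.ofReal (Real.sqrt (V*Q)) * b ℓ) * a ℓ := by ring
    have hre2 : ENNReal.ofReal (Real.sqrt (V * Q) * V * 4 ^ n + 1)
          * ((volume (ball x₀ (2 ^ (ℓ + 2) * rB)))⁻¹ * a ℓ)
        = (ENNReal.ofReal (Real.sqrt (V * Q) * V * 4 ^ n + 1)
          * (volume (ball x₀ (2 ^ (ℓ + 2) * rB)))⁻¹) * a ℓ := by ring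
    rw [hre1, hre2]
    apply mul_le_mul_left
    rw [← div_eq_mul_inv, ENNReal.le_div_iff_mul_le (Or.inl hvol0) (Or.inl hvolt), hvol]
    have hbmul : b ℓ * ENNReal.ofReal (((2:ℝ)^(ℓ+2)*rB)^n) = ENNReal.ofReal (4^n) := by
      rw [hb, ← ENNReal.ofReal_mul (by positivity : (0:ℝ) ≤ (((2:ℝ)^ℓ * rB)^n)⁻¹)]
      congr 1
      rw [show ((2:ℝ)^(ℓ+2)*rB) = ((2:ℝ)^ℓ*rB)*4 from by rw [pow_add]; ring, mul_pow]
      have hne : (((2:ℝ)^ℓ*rB)^n) ≠ 0 := by positivity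
      field_simp
      ring
    calc (ENNReal.ofReal (Real.sqrt (V*Q)) * b ℓ)
          * (ENNReal.ofReal (((2:ℝ)^(ℓ+2)*rB)^n) * v)
        = (b ℓ * ENNReal.ofReal (((2:ℝ)^(ℓ+2)*rB)^n))
            * (ENNReal.ofReal (Real.sqrt (V*Q)) * v) := by ring
      _ = ENNReal.ofReal (4^n)
            * (ENNReal.ofReal (Real.sqrt (V*Q)) * ENNReal.ofReal V) := by
          rw [hbmul, ← ENNReal.ofReal_toReal hvt, ← hV]
      _ = ENNReal.ofReal ((4:ℝ)^n * (Real.sqrt (V*Q) * V)) := by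
          rw [ENNReal.ofReal_mul (by positivity : (0:ℝ) ≤ (4:ℝ)^n),
            ENNReal.ofReal_mul (Real.sqrt_nonneg _)]
      _ ≤ ENNReal.ofReal (Real.sqrt (V * Q) * V * 4 ^ n + 1) := by
          apply ENNReal.ofReal_le_ofReal
          have : (4:ℝ)^n * (Real.sqrt (V*Q) * V) = Real.sqrt (V*Q) * V * 4^n := by ring
          linarith
  calc W ^ ((1:ℝ)/2) * U = ∑' ℓ, W ^ ((1:ℝ)/2) * (a ℓ * b ℓ) := by
        rw [hU]
        exact (ENNReal.tsum_mul_left).symm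
    _ ≤ ∑' ℓ, ENNReal.ofReal (Real.sqrt (V * Q) * V * 4 ^ n + 1)
          * ((volume (ball x₀ (2 ^ (ℓ + 2) * rB)))⁻¹ * a ℓ) :=
        ENNReal.tsum_le_tsum hterm
    _ = ENNReal.ofReal (Real.sqrt (V * Q) * V * 4 ^ n + 1)
          * ∑' ℓ, (volume (ball x₀ (2 ^ (ℓ + 2) * rB)))⁻¹ * a ℓ :=
        ENNReal.tsum_mul_left
    _ = ENNReal.ofReal (Real.sqrt (V * Q) * V * 4 ^ n + 1) * ∑' ℓ : ℕ,
          (volume (ball x₀ (2 ^ (ℓ + 2) * rB)))⁻¹ *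
            ∫⁻ z in ball x₀ (2 ^ (ℓ + 2) * rB) \ ball x₀ (2 ^ (ℓ + 1) * rB),
              ENNReal.ofReal |f z| := by
        refine congrArg _ (tsum_congr fun ℓ => ?_)
        rw [ha]
end
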